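/- Let R > 0 and θ ∈ (π/2, π). Then for every natural number N, the integral ∫_{−∞}^{∞} e^{−R²(1+cosh s)/(2t)} / ((1 + cosh s)(cosh(πs/θ) − cos(π²/θ))) ds divided by t^N tends to 0 as t → 0⁺; that is, this integral is O(t^∞) as t → 0. -/
import Mathlib


open MeasureTheory

lemma aux_sq_le_cosh (s : ℝ) : s ^ 2 / 8 ≤ Real.cosh s := by
  have h0 : (1 + |s| / 2) ^ 2 ≤ Real.exp |s| := by
    have := Real.add_one_le_exp (|s| / 2)
    have h1 : (0:ℝ) ≤ 1 + |s| / 2 := by positivity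
    calc (1 + |s| / 2) ^ 2 ≤ Real.exp (|s| / 2) ^ 2 := by
          apply pow_le_pow_left₀ h1; linarith
      _ = Real.exp |s| := by
          rw [← Real.exp_nat_mul]; congr 1; ring
  have h1 : Real.exp |s| ≤ Real.exp s + Real.exp (-s) := by
    rcases abs_cases s with ⟨h, _⟩ | ⟨h, _⟩ <;> rw [h] <;>
      [linarith [Real.exp_pos (-s)]; linarith [Real.exp_pos s]]
  have hs : |s| ^ 2 = s ^ 2 := sq_abs s
  rw [Real.cosh_eq]
  nlinarith [abs_nonneg s]

/-- For `R > 0` and `θ ∈ (π/2, π)`, the integral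
`∫_{−∞}^{∞} e^{−R²(1+cosh s)/(2t)} / ((1+cosh s)(cosh(πs/θ) − cos(π²/θ))) ds`
is `O(t^∞)` as `t → 0⁺`: divided by any power `t^N` it tends to `0`. -/
theorem sector_remainder_rapid_decay (R θ : ℝ) (hR : 0 < R)
    (hθ : θ ∈ Set.Ioo (Real.pi / 2) Real.pi) (N : ℕ) :
    Filter.Tendsto
      (fun t : ℝ =>
        (∫ s : ℝ, Real.exp (-R ^ 2 * (1 + Real.cosh s) / (2 * t)) /
          ((1 + Real.cosh s) * (Real.cosh (Real.pi * s / θ) - Real.cos (Real.pi ^ 2 / θ))))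
          / t ^ N)
      (nhdsWithin 0 (Set.Ioi 0)) (nhds 0) := by
  obtain ⟨hθ1, hθ2⟩ := hθ
  have hπ : (0:ℝ) < Real.pi := Real.pi_pos
  have hθ0 : 0 < θ := lt_trans (by positivity) hθ1
  set c : ℝ := Real.cos (Real.pi ^ 2 / θ) with hc_def
  have hx1 : Real.pi < Real.pi ^ 2 / θ := by
    rw [lt_div_iff₀ hθ0]; nlinarith
  have hx2 : Real.pi ^ 2 / θ < 2 * Real.pi := by
    rw [div_lt_iff₀ hθ0]; nlinarith
  have hc1 : c < 1 := by
    rcases lt_or_eq_of_le (Real.cos_le_one (Real.pi ^ 2 / θ)) with h | h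
    · exact h
    · exfalso
      have := (Real.cos_eq_one_iff_of_lt_of_lt (by linarith) hx2).mp h
      linarith
  have hd : (0:ℝ) < 1 - c := by linarith
  have hD : ∀ s : ℝ, 2 * (1 - c) ≤
      (1 + Real.cosh s) * (Real.cosh (Real.pi * s / θ) - c) := by
    intro s
    have h1 : (2:ℝ) ≤ 1 + Real.cosh s := by linarith [Real.one_le_cosh s]
    have h2 : 1 - c ≤ Real.cosh (Real.pi * s / θ) - c := by
      linarith [Real.one_le_cosh (Real.pi * s / θ)]
    nlinarith
  have hDpos : ∀ s : ℝ, 0 < (1 + Real.cosh s) * (Real.cosh (Real.pi * s / θ) - c) := by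
    intro s; have := hD s; linarith
  set a : ℝ := R ^ 2 / 2 with ha_def
  have ha : 0 < a := by positivity
  set g : ℝ → ℝ := fun s => Real.exp (-(a * Real.cosh s)) /
      ((1 + Real.cosh s) * (Real.cosh (Real.pi * s / θ) - c)) with hg_def
  have hg_nonneg : ∀ s, 0 ≤ g s := fun s =>
    div_nonneg (Real.exp_nonneg _) (hDpos s).le
  have hg_cont : Continuous g := by
    apply Continuous.div
    · fun_prop
    · fun_prop
    · intro s; exact (hDpos s).ne'
  have hg_int : Integrable g := by
    apply Integrable.mono'
      (g := fun s => (1 / (2 * (1 - c))) * Real.exp (-(a / 8) * s ^ 2))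
    · exact (integrable_exp_neg_mul_sq (by positivity)).const_mul _
    · exact hg_cont.aestronglyMeasurable
    · filter_upwards with s
      rw [Real.norm_eq_abs, abs_of_nonneg (hg_nonneg s)]
      have h1 : Real.exp (-(a * Real.cosh s)) ≤ Real.exp (-(a / 8) * s ^ 2) := by
        apply Real.exp_le_exp.mpr
        have := aux_sq_le_cosh s
        nlinarith
      calc g s ≤ Real.exp (-(a * Real.cosh s)) / (2 * (1 - c)) := by
            simp only [hg_def]
            gcongr
            · linarith [Real.one_le_cosh s]
            · exact Real.one_le_cosh _
        _ ≤ (1 / (2 * (1 - c))) * Real.exp (-(a / 8) * s ^ 2) := by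
            rw [one_div, inv_mul_eq_div]
            gcongr
  set C : ℝ := ∫ s : ℝ, g s with hC_def
  have hC0 : 0 ≤ C := integral_nonneg hg_nonneg
  have key : ∀ t : ℝ, t ∈ Set.Ioo (0:ℝ) 1 →
      (∫ s : ℝ, Real.exp (-R ^ 2 * (1 + Real.cosh s) / (2 * t)) /
          ((1 + Real.cosh s) * (Real.cosh (Real.pi * s / θ) - c)))
        ≤ Real.exp (-(a / t)) * C := by
    intro t ht
    obtain ⟨ht0, ht1⟩ := ht
    have hmono : ∀ s : ℝ,
        Real.exp (-R ^ 2 * (1 + Real.cosh s) / (2 * t)) /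
          ((1 + Real.cosh s) * (Real.cosh (Real.pi * s / θ) - c))
        ≤ Real.exp (-(a / t)) * g s := by
      intro s
      have hcosh : (1:ℝ) ≤ Real.cosh s := Real.one_le_cosh s
      have hexp : Real.exp (-R ^ 2 * (1 + Real.cosh s) / (2 * t))
          ≤ Real.exp (-(a / t)) * Real.exp (-(a * Real.cosh s)) := by
        rw [← Real.exp_add]
        apply Real.exp_le_exp.mpr
        have h1 : -R ^ 2 * (1 + Real.cosh s) / (2 * t)
            = -(a / t) + -(a * Real.cosh s / t) := by
          rw [ha_def]; field_simp; ring
        rw [h1]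
        have h2 : a * Real.cosh s ≤ a * Real.cosh s / t := by
          rw [le_div_iff₀ ht0]
          nlinarith [mul_pos ha (show (0:ℝ) < Real.cosh s by linarith)]
        linarith
      calc Real.exp (-R ^ 2 * (1 + Real.cosh s) / (2 * t)) /
            ((1 + Real.cosh s) * (Real.cosh (Real.pi * s / θ) - c))
          ≤ (Real.exp (-(a / t)) * Real.exp (-(a * Real.cosh s))) /
            ((1 + Real.cosh s) * (Real.cosh (Real.pi * s / θ) - c)) := by
            gcongr
            all_goals first | exact (hDpos s).le | exact hexp
        _ = Real.exp (-(a / t)) * g s := by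
            rw [hg_def, mul_div_assoc]
    calc (∫ s : ℝ, Real.exp (-R ^ 2 * (1 + Real.cosh s) / (2 * t)) /
            ((1 + Real.cosh s) * (Real.cosh (Real.pi * s / θ) - c)))
        ≤ ∫ s : ℝ, Real.exp (-(a / t)) * g s := by
          apply integral_mono_of_nonneg
          · filter_upwards with s
            exact div_nonneg (Real.exp_nonneg _) (hDpos s).le
          · exact hg_int.const_mul _
          · filter_upwards with s
            exact hmono s
      _ = Real.exp (-(a / t)) * C := by
          rw [hC_def, integral_const_mul]
  have hupper : Filter.Tendsto (fun t : ℝ => C * (Real.exp (-(a / t)) / t ^ N))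
      (nhdsWithin 0 (Set.Ioi 0)) (nhds 0) := by
    rw [show (nhds (0:ℝ)) = nhds (C * 0) by rw [mul_zero]]
    apply Filter.Tendsto.const_mul
    have h1 : Filter.Tendsto (fun u : ℝ => u ^ N * Real.exp (-u))
        Filter.atTop (nhds 0) := Real.tendsto_pow_mul_exp_neg_atTop_nhds_zero N
    have h2 : Filter.Tendsto (fun u : ℝ => a * u) Filter.atTop Filter.atTop :=
      Filter.Tendsto.const_mul_atTop ha Filter.tendsto_id
    have h3 : Filter.Tendsto (fun u : ℝ => (a * u) ^ N * Real.exp (-(a * u)))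
        Filter.atTop (nhds 0) := h1.comp h2
    have h4 := h3.const_mul (a⁻¹ ^ N)
    rw [mul_zero] at h4
    have h5 : Filter.Tendsto (fun u : ℝ => u ^ N * Real.exp (-(a * u)))
        Filter.atTop (nhds 0) := by
      refine h4.congr (fun u => ?_)
      rw [← mul_assoc, ← mul_pow, inv_mul_cancel_left₀ ha.ne']
    have h6 := h5.comp tendsto_inv_nhdsGT_zero
    apply h6.congr'
    filter_upwards [self_mem_nhdsWithin] with t ht
    simp only [Function.comp]
    rw [inv_pow, inv_mul_eq_div, div_eq_mul_inv a t]
  apply tendsto_of_tendsto_of_tendsto_of_le_of_le' tendsto_const_nhds hupper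
  · filter_upwards [self_mem_nhdsWithin] with t ht
    exact div_nonneg
      (integral_nonneg fun s => div_nonneg (Real.exp_nonneg _) (hDpos s).le)
      (pow_nonneg (le_of_lt ht) N)
  · filter_upwards [Ioo_mem_nhdsGT_of_mem (Set.left_mem_Ico.mpr one_pos)] with t ht
    have hkey := key t ht
    have ht0 : 0 < t := ht.1
    calc (∫ s : ℝ, Real.exp (-R ^ 2 * (1 + Real.cosh s) / (2 * t)) /
            ((1 + Real.cosh s) * (Real.cosh (Real.pi * s / θ) - c))) / t ^ N
        ≤ (Real.exp (-(a / t)) * C) / t ^ N := by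
          gcongr
      _ = C * (Real.exp (-(a / t)) / t ^ N) := by ring
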